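/- Fréchet derivative of the discrete Schrödinger potential map (corrected formula from the proof of Proposition 5.1; the paper's stated formula omits the factor 1/2, which does not affect its null-space conclusions). Fix a strictly positive γ₀ : X → ℝ and let F : ℝ^X → ℝ^X be the map γ ↦ q̃(γ; γ₀). Then at every strictly positive γ : X → ℝ, F is differentiable and its derivative is the linear map δ ↦ −(1/2)·[ √(γ₀/γ) ⊙ ( L(γ₀) · (δ/√(γ⊙γ₀)) ) + (δ/γ) ⊙ q̃(γ; γ₀) ], where ⊙, /, √ are componentwise. -/

import Mathlib

open Matrix BigOperators

/-- The geometric-mean weighted Laplacian on the line graph. -/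
noncomputable def lineLap {X : Type*} [Fintype X] [DecidableEq X]
    (A : X → X → Prop) [DecidableRel A] (γ : X → ℝ) : Matrix X X ℝ :=
  Matrix.of fun e f =>
    if e = f then ∑ g ∈ Finset.univ.filter (fun g => A e g), Real.sqrt (γ e * γ g)
    else if A e f then -Real.sqrt (γ e * γ f) else 0

/-- The discrete Schrödinger potential `q̃(γ₁; γ₀) = −(L(γ₀)·s)/s` with
`s = √(γ₁/γ₀)` componentwise, given by the discrete Liouville identity. -/
noncomputable def qtil {X : Type*} [Fintype X] [DecidableEq X]
    (A : X → X → Prop) [DecidableRel A] (γ₀ γ₁ : X → ℝ) : X → ℝ :=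
  fun e => -((lineLap A γ₀).mulVec (fun x => Real.sqrt (γ₁ x / γ₀ x)) e)
      / Real.sqrt (γ₁ e / γ₀ e)

set_option maxHeartbeats 1000000 in
/-- Fréchet derivative of the discrete Schrödinger potential map: at every strictly
positive `γ`, the map `F : γ ↦ q̃(γ; γ₀)` is differentiable with derivative
`δ ↦ −(1/2) [ √(γ₀/γ) ⊙ (L(γ₀)·(δ/√(γ⊙γ₀))) + (δ/γ) ⊙ q̃(γ; γ₀) ]`. -/
theorem qtil_frechet_derivative
    {X : Type*} [Fintype X] [DecidableEq X]
    (A : X → X → Prop) [DecidableRel A]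
    (hsymm : ∀ e f, A e f → A f e) (hirr : ∀ e, ¬ A e e)
    (γ₀ : X → ℝ) (h₀ : ∀ e, 0 < γ₀ e) :
    ∀ γ : X → ℝ, (∀ e, 0 < γ e) →
      ∃ L : (X → ℝ) →L[ℝ] (X → ℝ),
        HasFDerivAt (fun g : X → ℝ => qtil A γ₀ g) L γ ∧
        ∀ δ : X → ℝ, ∀ e : X,
          L δ e = -(1/2) *
            (Real.sqrt (γ₀ e / γ e) *
                ((lineLap A γ₀).mulVec (fun x => δ x / Real.sqrt (γ x * γ₀ x)) e)
              + (δ e / γ e) * qtil A γ₀ γ e) := by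
  intro γ hγ
  classical
  set M : Matrix X X ℝ := lineLap A γ₀ with hM
  -- positivity facts
  have hq : ∀ e, 0 < γ e / γ₀ e := fun e => div_pos (hγ e) (h₀ e)
  have hsqpos : ∀ e, 0 < Real.sqrt (γ e / γ₀ e) := fun e => Real.sqrt_pos.2 (hq e)
  -- derivative of g ↦ √(g e / γ₀ e)
  have hS : ∀ e : X, HasFDerivAt (fun g : X → ℝ => Real.sqrt (g e / γ₀ e))
      ((1 / (2 * Real.sqrt (γ e / γ₀ e))) • ((γ₀ e)⁻¹ •
        (ContinuousLinearMap.proj e : (X → ℝ) →L[ℝ] ℝ))) γ := by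
    intro e
    have h1 : HasFDerivAt (fun g : X → ℝ => g e / γ₀ e)
        ((γ₀ e)⁻¹ • (ContinuousLinearMap.proj e : (X → ℝ) →L[ℝ] ℝ)) γ := by
      have := (hasFDerivAt_apply (𝕜 := ℝ) e γ).const_mul (γ₀ e)⁻¹
      simpa [div_eq_inv_mul, smul_smul] using this
    exact h1.sqrt (ne_of_gt (hq e))
  set S : X → (X → ℝ) →L[ℝ] ℝ := fun e =>
    (1 / (2 * Real.sqrt (γ e / γ₀ e))) • ((γ₀ e)⁻¹ •
      (ContinuousLinearMap.proj e : (X → ℝ) →L[ℝ] ℝ)) with hSdef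
  have hSapp : ∀ e δ, S e δ = δ e / (2 * Real.sqrt (γ e * γ₀ e)) := by
    intro e δ
    have h1 : Real.sqrt (γ e / γ₀ e) * γ₀ e = Real.sqrt (γ e * γ₀ e) := by
      rw [Real.sqrt_div (le_of_lt (hγ e)), Real.sqrt_mul (le_of_lt (hγ e)),
        ← Real.mul_self_sqrt (le_of_lt (h₀ e))]
      field_simp [(Real.sqrt_pos.2 (h₀ e)).ne']
      rw [Real.sqrt_sq (Real.sqrt_nonneg _)]
    simp only [hSdef, ContinuousLinearMap.smul_apply, ContinuousLinearMap.proj_apply,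
      smul_eq_mul]
    rw [← h1]
    field_simp
  -- numerator and its derivative
  set N : X → (X → ℝ) →L[ℝ] ℝ := fun e => ∑ f, M e f • S f with hNdef
  have hNum : ∀ e : X, HasFDerivAt
      (fun g : X → ℝ => ∑ f, M e f * Real.sqrt (g f / γ₀ f)) (N e) γ := by
    intro e
    exact HasFDerivAt.fun_sum fun f _ => (hS f).const_mul (M e f)
  -- derivative of each component of qtil
  have hcomp : ∀ e : X, ∃ D : (X → ℝ) →L[ℝ] ℝ,
      HasFDerivAt (fun g : X → ℝ => qtil A γ₀ g e) D γ ∧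
      ∀ δ : X → ℝ, D δ = -(1/2) *
        (Real.sqrt (γ₀ e / γ e) * (M.mulVec (fun x => δ x / Real.sqrt (γ x * γ₀ x)) e)
          + (δ e / γ e) * qtil A γ₀ γ e) := by
    intro e
    have hinv : HasFDerivAt (fun g : X → ℝ => (Real.sqrt (g e / γ₀ e))⁻¹)
        ((-(Real.sqrt (γ e / γ₀ e) ^ 2)⁻¹) • S e) γ :=
      (hasDerivAt_inv (ne_of_gt (hsqpos e))).comp_hasFDerivAt γ (hS e)
    have hmain : HasFDerivAt (fun g : X → ℝ => qtil A γ₀ g e)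
        (((-∑ f, M e f * Real.sqrt (γ f / γ₀ f)) • ((-(Real.sqrt (γ e / γ₀ e) ^ 2)⁻¹) • S e))
          + ((Real.sqrt (γ e / γ₀ e))⁻¹ • (-N e))) γ := by
      have h1 := ((hNum e).neg).mul hinv
      have heq : (fun g : X → ℝ => qtil A γ₀ g e)
          = fun g : X → ℝ => (-∑ f, M e f * Real.sqrt (g f / γ₀ f)) *
              (Real.sqrt (g e / γ₀ e))⁻¹ := by
        funext g
        simp [qtil, Matrix.mulVec, dotProduct, div_eq_mul_inv, hM]
      rw [heq]
      exact h1
    refine ⟨_, hmain, ?_⟩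
    intro δ
    -- abbreviations
    set T : ℝ := M.mulVec (fun x => δ x / Real.sqrt (γ x * γ₀ x)) e with hT
    set Sv : ℝ := ∑ f, M e f * Real.sqrt (γ f / γ₀ f) with hSv
    have hNapp : N e δ = (1/2) * T := by
      simp only [hNdef, ContinuousLinearMap.sum_apply, ContinuousLinearMap.smul_apply,
        smul_eq_mul]
      rw [hT]
      simp only [Matrix.mulVec, dotProduct]
      rw [Finset.mul_sum]
      refine Finset.sum_congr rfl fun f _ => ?_
      rw [hSapp]
      ring
    have hqt : qtil A γ₀ γ e = -Sv / Real.sqrt (γ e / γ₀ e) := by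
      simp [qtil, Matrix.mulVec, dotProduct, hSv, hM]
    -- evaluate LHS
    rw [ContinuousLinearMap.add_apply, ContinuousLinearMap.smul_apply,
      ContinuousLinearMap.smul_apply, hSapp e δ, ContinuousLinearMap.smul_apply,
      ContinuousLinearMap.neg_apply, hNapp, hqt]
    simp only [smul_eq_mul]
    -- now a pure scalar identity
    have hsd : Real.sqrt (γ e / γ₀ e) = Real.sqrt (γ e) / Real.sqrt (γ₀ e) :=
      Real.sqrt_div (le_of_lt (hγ e)) _
    have hsd' : Real.sqrt (γ₀ e / γ e) = Real.sqrt (γ₀ e) / Real.sqrt (γ e) :=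
      Real.sqrt_div (le_of_lt (h₀ e)) _
    have hsm : Real.sqrt (γ e * γ₀ e) = Real.sqrt (γ e) * Real.sqrt (γ₀ e) :=
      Real.sqrt_mul (le_of_lt (hγ e)) _
    rw [hsd, hsd', hsm]
    set a := Real.sqrt (γ e) with hadef
    set b := Real.sqrt (γ₀ e) with hbdef
    have ha : (0:ℝ) < a := Real.sqrt_pos.2 (hγ e)
    have hb : (0:ℝ) < b := Real.sqrt_pos.2 (h₀ e)
    have hge : γ e = a * a := (Real.mul_self_sqrt (le_of_lt (hγ e))).symm
    rw [hge]
    clear_value a b T Sv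
    field_simp
    ring
  choose D hD1 hD2 using hcomp
  refine ⟨ContinuousLinearMap.pi D, ?_, ?_⟩
  · exact hasFDerivAt_pi.2 hD1
  · intro δ e
    simpa using hD2 e δ
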